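/- Uniform linear array Lemma 2: Let M > K, let d : {1,…,M} → ℝ be an arithmetic progression (d_k = d_1 + (k−1)δ), λ > 0 a wavelength, and θ, ϑ ∈ ℝ^K direction vectors. Define the M×K steering matrices A and B by A_{k i} = exp(−j·(2π/λ)·d_k·sin θ_i)/√M and B_{k i} = exp(−j·(2π/λ)·d_k·sin ϑ_i)/√M, and the derivative matrix D by D_{k i} = (−j·(2π/λ)·cos ϑ_i) · d_k · B_{k i}. Let Σ be a K×K diagonal matrix with real diagonal entries. Assume BᴴB is invertible, and set B† = (BᴴB)⁻¹Bᴴ and P⊥ = I_M − B B†. Then for each i, the (i,i) entry of B† (A Σ Aᴴ) P⊥ D is a real number (its imaginary part is zero). -/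

import Mathlib

open Matrix

/-- Lemma 2 (ULA): each diagonal entry of B† (A Σ Aᴴ) P⊥ D is real. -/
theorem stmt_10 {M K : ℕ} (hMK : K < M)
    (d : Fin M → ℝ) (d₁ δ : ℝ) (hd : ∀ k : Fin M, d k = d₁ + (k : ℕ) * δ)
    (lam : ℝ) (hlam : 0 < lam)
    (θ ϑ : Fin K → ℝ)
    (A B D : Matrix (Fin M) (Fin K) ℂ)
    (hA : A = Matrix.of fun k i =>
      Complex.exp (-Complex.I * ((2 * Real.pi / lam * d k * Real.sin (θ i) : ℝ) : ℂ))
        / ((Real.sqrt M : ℝ) : ℂ))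
    (hB : B = Matrix.of fun k i =>
      Complex.exp (-Complex.I * ((2 * Real.pi / lam * d k * Real.sin (ϑ i) : ℝ) : ℂ))
        / ((Real.sqrt M : ℝ) : ℂ))
    (hD : D = Matrix.of fun k i =>
      -Complex.I * ((2 * Real.pi / lam * Real.cos (ϑ i) : ℝ) : ℂ) * ((d k : ℝ) : ℂ) * B k i)
    (σ : Fin K → ℝ)
    (S : Matrix (Fin K) (Fin K) ℂ) (hS : S = Matrix.diagonal fun i => ((σ i : ℝ) : ℂ))
    (hBB : IsUnit (Bᴴ * B).det) :
    ∀ i : Fin K,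
      ((((Bᴴ * B)⁻¹ * Bᴴ) * (A * S * Aᴴ)
        * ((1 : Matrix (Fin M) (Fin M) ℂ) - B * ((Bᴴ * B)⁻¹ * Bᴴ)) * D) i i).im = 0 := by
  intro i
  have hM1 : 1 ≤ M := lt_of_le_of_lt (Nat.zero_le K) hMK
  -- the mirror sum s : d (rev k) = s - d k
  set s : ℝ := 2 * d₁ + (M - 1 : ℕ) * δ with hs
  have hrev : ∀ k : Fin M, d (Fin.rev k) = s - d k := by
    intro k
    have hk1 : (k : ℕ) + 1 ≤ M := k.isLt
    rw [hd, hd, hs, Fin.val_rev]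
    rw [Nat.cast_sub hk1, Nat.cast_sub hM1]
    push_cast
    ring
  -- scalar conjugation of exponentials
  have key : ∀ x : ℝ, (starRingEnd ℂ) (Complex.exp (-Complex.I * (x : ℂ)))
      = Complex.exp (Complex.I * (x : ℂ)) := by
    intro x
    rw [← Complex.exp_conj]
    congr 1
    simp [Complex.conj_ofReal]
  have key2 : ∀ x : ℝ, (starRingEnd ℂ) (Complex.I * (x : ℂ)) = -Complex.I * (x : ℂ) := by
    intro x
    rw [_root_.map_mul, Complex.conj_I, Complex.conj_ofReal]
  -- phase vectors
  set φA : Fin K → ℂ := fun j => Complex.exp (Complex.I * ((2 * Real.pi / lam * s * Real.sin (θ j) : ℝ) : ℂ)) with hφA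
  set φB : Fin K → ℂ := fun j => Complex.exp (Complex.I * ((2 * Real.pi / lam * s * Real.sin (ϑ j) : ℝ) : ℂ)) with hφB
  have hφAu : ∀ j, φA j * (starRingEnd ℂ) (φA j) = 1 := by
    intro j
    simp only [hφA]
    rw [← Complex.exp_conj, ← Complex.exp_add, key2]
    rw [show Complex.I * ((2 * Real.pi / lam * s * Real.sin (θ j) : ℝ) : ℂ)
        + -Complex.I * ((2 * Real.pi / lam * s * Real.sin (θ j) : ℝ) : ℂ) = 0 by ring]
    exact Complex.exp_zero
  have hφBu : ∀ j, φB j * (starRingEnd ℂ) (φB j) = 1 := by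
    intro j
    simp only [hφB]
    rw [← Complex.exp_conj, ← Complex.exp_add, key2]
    rw [show Complex.I * ((2 * Real.pi / lam * s * Real.sin (ϑ j) : ℝ) : ℂ)
        + -Complex.I * ((2 * Real.pi / lam * s * Real.sin (ϑ j) : ℝ) : ℂ) = 0 by ring]
    exact Complex.exp_zero
  -- diagonal phase matrices
  set ΦA : Matrix (Fin K) (Fin K) ℂ := Matrix.diagonal φA with hΦA
  set ΦB : Matrix (Fin K) (Fin K) ℂ := Matrix.diagonal φB with hΦB
  set ΨA : Matrix (Fin K) (Fin K) ℂ := Matrix.diagonal (fun j => (starRingEnd ℂ) (φA j)) with hΨA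
  set ΨB : Matrix (Fin K) (Fin K) ℂ := Matrix.diagonal (fun j => (starRingEnd ℂ) (φB j)) with hΨB
  have hΦΨB : ΦB * ΨB = 1 := by
    rw [hΦB, hΨB, Matrix.diagonal_mul_diagonal,
      show (fun j => φB j * (starRingEnd ℂ) (φB j)) = fun _ => (1 : ℂ) from funext hφBu]
    exact Matrix.diagonal_one
  have hΨΦB : ΨB * ΦB = 1 := by
    rw [hΦB, hΨB, Matrix.diagonal_mul_diagonal,
      show (fun j => (starRingEnd ℂ) (φB j) * φB j) = fun _ => (1 : ℂ) from
        funext fun j => by rw [mul_comm]; exact hφBu j]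
    exact Matrix.diagonal_one
  have hΦΨB' : ∀ X : Matrix (Fin K) (Fin M) ℂ, ΦB * (ΨB * X) = X := by
    intro X; rw [← Matrix.mul_assoc, hΦΨB, Matrix.one_mul]
  -- flip matrix
  set J : Matrix (Fin M) (Fin M) ℂ := (Fin.revPerm : Equiv.Perm (Fin M)).toPEquiv.toMatrix with hJ
  have hJmul : ∀ (X : Matrix (Fin M) (Fin K) ℂ), J * X = X.submatrix Fin.rev id := by
    intro X
    rw [hJ, PEquiv.toMatrix_toPEquiv_mul]
    ext a b
    simp [Fin.revPerm_apply]
  have hJmulM : ∀ (X : Matrix (Fin M) (Fin M) ℂ), J * X = X.submatrix Fin.rev id := by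
    intro X
    rw [hJ, PEquiv.toMatrix_toPEquiv_mul]
    ext a b
    simp [Fin.revPerm_apply]
  have hJJK : ∀ X : Matrix (Fin M) (Fin K) ℂ, J * (J * X) = X := by
    intro X
    rw [hJmul, hJmul]
    ext a b
    simp [Fin.rev_rev]
  have hJJM : ∀ X : Matrix (Fin M) (Fin M) ℂ, J * (J * X) = X := by
    intro X
    rw [hJmulM, hJmulM]
    ext a b
    simp [Fin.rev_rev]
  have hJJ : J * J = 1 := by
    have h := hJJM 1
    rwa [Matrix.mul_one] at h
  have hJH : Jᴴ = J := by
    ext a b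
    rw [hJ]
    simp only [Matrix.conjTranspose_apply, PEquiv.toMatrix_toPEquiv_apply, Fin.revPerm_apply,
      Matrix.one_apply]
    by_cases h : Fin.rev b = a
    · have h2 : Fin.rev a = b := by rw [← h, Fin.rev_rev]
      simp [h, h2]
    · have h2 : ¬ Fin.rev a = b := fun hh => h (by rw [← hh, Fin.rev_rev])
      simp [h, h2]
  -- entrywise conjugation identities
  have hcAe : ∀ k j, (starRingEnd ℂ) (A k j) = A (Fin.rev k) j * φA j := by
    intro k j
    rw [hA]
    simp only [Matrix.of_apply, hφA]
    rw [map_div₀, key, Complex.conj_ofReal]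
    conv_rhs => rw [div_mul_eq_mul_div]
    rw [← Complex.exp_add]
    congr 2
    rw [hrev]
    push_cast
    ring
  have hcBe : ∀ k j, (starRingEnd ℂ) (B k j) = B (Fin.rev k) j * φB j := by
    intro k j
    rw [hB]
    simp only [Matrix.of_apply, hφB]
    rw [map_div₀, key, Complex.conj_ofReal]
    conv_rhs => rw [div_mul_eq_mul_div]
    rw [← Complex.exp_add]
    congr 2
    rw [hrev]
    push_cast
    ring
  set Cd : Fin K → ℂ := fun j => -Complex.I * ((2 * Real.pi / lam * Real.cos (ϑ j) : ℝ) : ℂ) with hCd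
  set Cm : Matrix (Fin K) (Fin K) ℂ := Matrix.diagonal Cd with hCm
  have hcDe : ∀ k j, (starRingEnd ℂ) (D k j)
      = (D (Fin.rev k) j - (s : ℂ) * (B (Fin.rev k) j * Cd j)) * φB j := by
    intro k j
    rw [hD]
    simp only [Matrix.of_apply, hCd]
    rw [_root_.map_mul, _root_.map_mul, _root_.map_mul, map_neg, Complex.conj_I,
      Complex.conj_ofReal, Complex.conj_ofReal, hcBe, hrev]
    push_cast
    ring
  -- matrix-level conjugation identities
  have hcA : A.map (starRingEnd ℂ) = J * A * ΦA := by
    ext k j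
    rw [Matrix.map_apply, hcAe, hΦA, Matrix.mul_diagonal, hJmul, Matrix.submatrix_apply]
    rfl
  have hcB : B.map (starRingEnd ℂ) = J * B * ΦB := by
    ext k j
    rw [Matrix.map_apply, hcBe, hΦB, Matrix.mul_diagonal, hJmul, Matrix.submatrix_apply]
    rfl
  have hcD : D.map (starRingEnd ℂ) = J * ((D - (s : ℂ) • (B * Cm)) * ΦB) := by
    ext k j
    rw [Matrix.map_apply, hcDe, hJmul, Matrix.submatrix_apply, hΦB, Matrix.mul_diagonal,
      Matrix.sub_apply, Matrix.smul_apply, hCm, Matrix.mul_diagonal, smul_eq_mul]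
    rfl
  have hcS : S.map (starRingEnd ℂ) = S := by
    rw [hS, Matrix.diagonal_map (map_zero _)]
    congr 1
    funext j
    simp [Complex.conj_ofReal]
  have hmapH : ∀ (X : Matrix (Fin M) (Fin K) ℂ),
      (Xᴴ).map (starRingEnd ℂ) = (X.map (starRingEnd ℂ))ᴴ := by
    intro X
    ext a b
    simp [Matrix.conjTranspose_apply]
  have hdstarA : (Matrix.diagonal (star φA) : Matrix (Fin K) (Fin K) ℂ) = ΨA := by
    rw [hΨA]
    congr 1
  have hdstarB : (Matrix.diagonal (star φB) : Matrix (Fin K) (Fin K) ℂ) = ΨB := by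
    rw [hΨB]
    congr 1
  have hcAH : (Aᴴ).map (starRingEnd ℂ) = ΨA * (Aᴴ * J) := by
    rw [hmapH, hcA, Matrix.conjTranspose_mul, Matrix.conjTranspose_mul, hJH, hΦA,
      Matrix.diagonal_conjTranspose, hdstarA]
  have hcBH : (Bᴴ).map (starRingEnd ℂ) = ΨB * (Bᴴ * J) := by
    rw [hmapH, hcB, Matrix.conjTranspose_mul, Matrix.conjTranspose_mul, hJH, hΦB,
      Matrix.diagonal_conjTranspose, hdstarB]
  have hSA : ∀ X : Matrix (Fin K) (Fin M) ℂ, ΦA * (S * (ΨA * X)) = S * X := by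
    intro X
    rw [← Matrix.mul_assoc, ← Matrix.mul_assoc]
    congr 1
    rw [hΦA, hΨA, hS, Matrix.diagonal_mul_diagonal, Matrix.diagonal_mul_diagonal]
    have h : (fun j => φA j * ((σ j : ℝ) : ℂ) * (starRingEnd ℂ) (φA j))
        = fun j => ((σ j : ℝ) : ℂ) := by
      funext j
      have h4 : φA j * ((σ j : ℝ) : ℂ) * (starRingEnd ℂ) (φA j)
          = ((σ j : ℝ) : ℂ) * (φA j * (starRingEnd ℂ) (φA j)) := by ring
      rw [h4, hφAu, mul_one]
    rw [h]
  -- conjugation of G = BᴴB, its inverse, B† and P⊥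
  have hcG : (Bᴴ * B).map (starRingEnd ℂ) = ΨB * ((Bᴴ * B) * ΦB) := by
    rw [Matrix.map_mul, hcBH, hcB]
    simp only [Matrix.mul_assoc, hJJK]
  have hinv1 : ((Bᴴ * B)⁻¹).map (starRingEnd ℂ) * ((Bᴴ * B)).map (starRingEnd ℂ) = 1 := by
    rw [← Matrix.map_mul, Matrix.nonsing_inv_mul _ hBB,
      Matrix.map_one _ (map_zero _) (map_one _)]
  have hGinv : (((Bᴴ * B)).map (starRingEnd ℂ))⁻¹ = ((Bᴴ * B)⁻¹).map (starRingEnd ℂ) :=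
    Matrix.inv_eq_left_inv hinv1
  have hΦinv : ΦB⁻¹ = ΨB := Matrix.inv_eq_left_inv hΨΦB
  have hΨinv : ΨB⁻¹ = ΦB := Matrix.inv_eq_left_inv hΦΨB
  have hcGi : ((Bᴴ * B)⁻¹).map (starRingEnd ℂ) = ΨB * ((Bᴴ * B)⁻¹ * ΦB) := by
    rw [← hGinv, hcG, Matrix.mul_inv_rev, Matrix.mul_inv_rev, hΦinv, hΨinv, Matrix.mul_assoc]
  have hcBd : ((Bᴴ * B)⁻¹ * Bᴴ).map (starRingEnd ℂ) = ΨB * (((Bᴴ * B)⁻¹ * Bᴴ) * J) := by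
    rw [Matrix.map_mul, hcGi, hcBH]
    simp only [Matrix.mul_assoc, hΦΨB']
  have hcR : (A * S * Aᴴ).map (starRingEnd ℂ) = J * ((A * S * Aᴴ) * J) := by
    rw [Matrix.map_mul, Matrix.map_mul, hcA, hcS, hcAH]
    simp only [Matrix.mul_assoc, hSA]
  have hcP : ((1 : Matrix (Fin M) (Fin M) ℂ) - B * ((Bᴴ * B)⁻¹ * Bᴴ)).map (starRingEnd ℂ)
      = J * (((1 : Matrix (Fin M) (Fin M) ℂ) - B * ((Bᴴ * B)⁻¹ * Bᴴ)) * J) := by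
    rw [Matrix.map_sub _ (fun a b => map_sub (starRingEnd ℂ) a b),
      Matrix.map_one _ (map_zero _) (map_one _), Matrix.map_mul, hcB, hcBd,
      Matrix.sub_mul, Matrix.mul_sub, Matrix.one_mul, hJJ]
    simp only [Matrix.mul_assoc, hΦΨB']
  have hPB : ((1 : Matrix (Fin M) (Fin M) ℂ) - B * ((Bᴴ * B)⁻¹ * Bᴴ)) * B = 0 := by
    rw [Matrix.sub_mul, Matrix.one_mul, Matrix.mul_assoc, Matrix.mul_assoc,
      Matrix.nonsing_inv_mul _ hBB, Matrix.mul_one, sub_self]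
  have h1 : (D - (s : ℂ) • (B * Cm)) * ΦB = D * ΦB - (s : ℂ) • (B * (Cm * ΦB)) := by
    rw [Matrix.sub_mul, Matrix.smul_mul, Matrix.mul_assoc]
  have hDexp : ((1 : Matrix (Fin M) (Fin M) ℂ) - B * ((Bᴴ * B)⁻¹ * Bᴴ))
        * ((D - (s : ℂ) • (B * Cm)) * ΦB)
      = ((1 : Matrix (Fin M) (Fin M) ℂ) - B * ((Bᴴ * B)⁻¹ * Bᴴ)) * (D * ΦB) := by
    rw [h1, Matrix.mul_sub, Matrix.mul_smul, ← Matrix.mul_assoc _ B (Cm * ΦB), hPB,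
      Matrix.zero_mul, smul_zero, sub_zero]
  -- putting it together
  have hcY : ((((Bᴴ * B)⁻¹ * Bᴴ) * (A * S * Aᴴ)
        * ((1 : Matrix (Fin M) (Fin M) ℂ) - B * ((Bᴴ * B)⁻¹ * Bᴴ)) * D)).map (starRingEnd ℂ)
      = ΨB * ((((Bᴴ * B)⁻¹ * Bᴴ) * (A * S * Aᴴ)
        * ((1 : Matrix (Fin M) (Fin M) ℂ) - B * ((Bᴴ * B)⁻¹ * Bᴴ)) * D) * ΦB) := by
    rw [Matrix.map_mul, Matrix.map_mul, Matrix.map_mul, hcBd, hcR, hcP, hcD]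
    simp only [Matrix.mul_assoc, hJJK, hJJM]
    try rw [hDexp]
    try simp only [Matrix.mul_assoc]
  have h := congrArg (fun X : Matrix (Fin K) (Fin K) ℂ => X i i) hcY
  simp only [Matrix.map_apply] at h
  rw [hΨB, Matrix.diagonal_mul, hΦB, Matrix.mul_diagonal] at h
  have h2 : (starRingEnd ℂ) ((((Bᴴ * B)⁻¹ * Bᴴ) * (A * S * Aᴴ)
        * ((1 : Matrix (Fin M) (Fin M) ℂ) - B * ((Bᴴ * B)⁻¹ * Bᴴ)) * D) i i)
      = (((Bᴴ * B)⁻¹ * Bᴴ) * (A * S * Aᴴ)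
        * ((1 : Matrix (Fin M) (Fin M) ℂ) - B * ((Bᴴ * B)⁻¹ * Bᴴ)) * D) i i := by
    rw [h]
    set z := (((Bᴴ * B)⁻¹ * Bᴴ) * (A * S * Aᴴ)
        * ((1 : Matrix (Fin M) (Fin M) ℂ) - B * ((Bᴴ * B)⁻¹ * Bᴴ)) * D) i i with hz
    have h3 : (starRingEnd ℂ) (φB i) * (z * φB i)
        = (φB i * (starRingEnd ℂ) (φB i)) * z := by ring
    rw [h3, hφBu, one_mul]
  exact Complex.conj_eq_iff_im.mp h2
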